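/- Consider the quadratic system over ℂ with parameters p,q: c₁² + c₂² = q − pq; c₁² + q d₁² − q c₁² = 1; d₁² + d₂² = p − pq + q; d₁c₁ + d₂c₂ = q − pq; a₁² + a₂² = 1 − q + pq; b₁a₁ + b₂a₂ = 1 − q + pq; b₁² + b₂² = 1 − q − p + pq. This system has a complex solution (a₁,a₂,b₁,b₂,c₁,c₂,d₁,d₂) for generic values of p, q. -/

import Mathlib

open MvPolynomial

/-- Every complex number has a square root. -/
lemma exists_sqrt' (x : ℂ) : ∃ z : ℂ, z ^ 2 = x :=
  IsAlgClosed.exists_pow_nat_eq x two_pos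

/-- The quadratic system `Sys₂^Y` arising from the gas of type 2 has a complex
solution for generic parameters `(p,q)`: there is a nonzero polynomial `g` in
`p, q` such that whenever `g(p,q) ≠ 0` the system is solvable. -/
theorem sys2Y_has_solution_generically :
    ∃ g : MvPolynomial (Fin 2) ℂ, g ≠ 0 ∧
      ∀ p q : ℂ, MvPolynomial.eval ![p, q] g ≠ 0 →
        ∃ a₁ a₂ b₁ b₂ c₁ c₂ d₁ d₂ : ℂ,
          c₁ ^ 2 + c₂ ^ 2 = q - p * q ∧
          c₁ ^ 2 + q * d₁ ^ 2 - q * c₁ ^ 2 = 1 ∧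
          d₁ ^ 2 + d₂ ^ 2 = p - p * q + q ∧
          d₁ * c₁ + d₂ * c₂ = q - p * q ∧
          a₁ ^ 2 + a₂ ^ 2 = 1 - q + p * q ∧
          b₁ * a₁ + b₂ * a₂ = 1 - q + p * q ∧
          b₁ ^ 2 + b₂ ^ 2 = 1 - q - p + p * q := by
  classical
  refine ⟨(X 1) * (1 - X 0) * (1 - 4 * X 0 * (1 - X 0) * (1 - X 1)) *
      (1 - X 0 * X 1) * (1 - X 1 + X 0 * X 1), ?_, ?_⟩
  · intro h
    have h2 := congrArg (MvPolynomial.eval ![(3 : ℂ), 2]) h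
    simp at h2
    norm_num at h2
  · intro p q hg
    have hev : MvPolynomial.eval ![p, q]
        ((X 1) * (1 - X 0) * (1 - 4 * X 0 * (1 - X 0) * (1 - X 1)) *
          (1 - X 0 * X 1) * (1 - X 1 + X 0 * X 1)) =
        q * (1 - p) * (1 - 4 * p * (1 - p) * (1 - q)) * (1 - p * q) * (1 - q + p * q) := by
      simp
    rw [hev] at hg
    have h1 := mul_ne_zero_iff.mp hg
    have h2 := mul_ne_zero_iff.mp h1.1
    have h3 := mul_ne_zero_iff.mp h2.1
    have h4 := mul_ne_zero_iff.mp h3.1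
    have hq : q ≠ 0 := h4.1
    have hp1 : (1 : ℂ) - p ≠ 0 := h4.2
    have hk : (1 - 4 * p * (1 - p) * (1 - q)) ≠ 0 := h3.2
    have hpq1 : (1 : ℂ) - p * q ≠ 0 := h2.2
    have hqpq : (1 : ℂ) - q + p * q ≠ 0 := h1.2
    have hs : (q * (1 - p)) ≠ 0 := mul_ne_zero hq hp1
    obtain ⟨w, hw⟩ := exists_sqrt' ((-2 + 6 * p + 2 * p * q - 4 * p * q ^ 2 - 4 * p ^ 2 - 6 * p ^ 2 * q + 8 * p ^ 2 * q ^ 2 + 4 * p ^ 3 * q - 4 * p ^ 3 * q ^ 2) ^ 2 - 4 * (1 - 4 * p * (1 - p) * (1 - q)) * (((1 - p) * (1 - p * q)) ^ 2))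
    obtain ⟨u, hu_def⟩ : ∃ u : ℂ, u = (-(-2 + 6 * p + 2 * p * q - 4 * p * q ^ 2 - 4 * p ^ 2 - 6 * p ^ 2 * q + 8 * p ^ 2 * q ^ 2 + 4 * p ^ 3 * q - 4 * p ^ 3 * q ^ 2) + w) / (2 * (1 - 4 * p * (1 - p) * (1 - q))) := ⟨_, rfl⟩
    have hquad : (1 - 4 * p * (1 - p) * (1 - q)) * u ^ 2 + (-2 + 6 * p + 2 * p * q - 4 * p * q ^ 2 - 4 * p ^ 2 - 6 * p ^ 2 * q + 8 * p ^ 2 * q ^ 2 + 4 * p ^ 3 * q - 4 * p ^ 3 * q ^ 2) * u + (((1 - p) * (1 - p * q)) ^ 2) = 0 := by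
      rw [hu_def]
      field_simp
      linear_combination hw
    have hu0 : u ≠ 0 := by
      intro h
      rw [h] at hquad
      have h' : ((1 - p) * (1 - p * q)) ^ 2 = 0 := by linear_combination hquad
      rcases mul_eq_zero.mp (pow_eq_zero_iff two_ne_zero |>.mp h') with h'' | h''
      · exact hp1 h''
      · exact hpq1 h''
    have hsu : (q * (1 - p)) - u ≠ 0 := by
      intro h
      have hu : u = (q * (1 - p)) := by linear_combination -h
      rw [hu] at hquad
      have key : ((1 - p) * (1 - q + p * q)) ^ 2 = 0 := by linear_combination hquad
      rcases mul_eq_zero.mp (pow_eq_zero_iff two_ne_zero |>.mp key) with h'' | h''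
      · exact hp1 h''
      · exact hqpq h''
    obtain ⟨c1, hc1⟩ := exists_sqrt' u
    obtain ⟨c2, hc2⟩ := exists_sqrt' ((q * (1 - p)) - u)
    have hc1ne : c1 ≠ 0 := by
      intro h; apply hu0; rw [← hc1, h]; ring
    have hc2ne : c2 ≠ 0 := by
      intro h; apply hsu; rw [← hc2, h]; ring
    have KI : (q * (q * (1 - p)) ^ 2 + (1 - (1 - q) * u) * u - ((p * (1 - q) + q) * q - (1 - (1 - q) * u)) * ((q * (1 - p)) - u)) ^ 2 = 4 * (q * (1 - p)) ^ 2 * q * ((1 - (1 - q) * u) * u) := by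
      linear_combination (q ^ 2) * hquad
    have h2sq : (2 : ℂ) * (q * (1 - p)) * q ≠ 0 :=
      mul_ne_zero (mul_ne_zero two_ne_zero hs) hq
    obtain ⟨d1, hd1_def⟩ : ∃ d1 : ℂ, d1 = (q * (q * (1 - p)) ^ 2 + (1 - (1 - q) * u) * u - ((p * (1 - q) + q) * q - (1 - (1 - q) * u)) * ((q * (1 - p)) - u)) / (2 * (q * (1 - p)) * q * c1) := ⟨_, rfl⟩
    obtain ⟨d2, hd2_def⟩ : ∃ d2 : ℂ,
        d2 = (2 * (q * (1 - p)) ^ 2 * q - (q * (q * (1 - p)) ^ 2 + (1 - (1 - q) * u) * u - ((p * (1 - q) + q) * q - (1 - (1 - q) * u)) * ((q * (1 - p)) - u))) / (2 * (q * (1 - p)) * q * c2) := ⟨_, rfl⟩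
    have hqd1 : q * d1 ^ 2 = 1 - (1 - q) * u := by
      have key1 : q * (q * (q * (1 - p)) ^ 2 + (1 - (1 - q) * u) * u - ((p * (1 - q) + q) * q - (1 - (1 - q) * u)) * ((q * (1 - p)) - u)) ^ 2 = (1 - (1 - q) * u) * (2 * (q * (1 - p)) * q * c1) ^ 2 := by
        linear_combination q * KI - (4 * (q * (1 - p)) ^ 2 * q ^ 2 * (1 - (1 - q) * u)) * hc1
      rw [hd1_def, div_pow, ← mul_div_assoc,
        div_eq_iff (pow_ne_zero 2 (mul_ne_zero h2sq hc1ne))]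
      linear_combination key1
    have hqd2 : q * d2 ^ 2 = (p * (1 - q) + q) * q - (1 - (1 - q) * u) := by
      have key2 : q * (2 * (q * (1 - p)) ^ 2 * q - (q * (q * (1 - p)) ^ 2 + (1 - (1 - q) * u) * u - ((p * (1 - q) + q) * q - (1 - (1 - q) * u)) * ((q * (1 - p)) - u))) ^ 2 =
          ((p * (1 - q) + q) * q - (1 - (1 - q) * u)) * (2 * (q * (1 - p)) * q * c2) ^ 2 := by
        linear_combination q * KI -
          (4 * (q * (1 - p)) ^ 2 * q ^ 2 * ((p * (1 - q) + q) * q - (1 - (1 - q) * u))) * hc2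
      rw [hd2_def, div_pow, ← mul_div_assoc,
        div_eq_iff (pow_ne_zero 2 (mul_ne_zero h2sq hc2ne))]
      linear_combination key2
    have hd1c1 : d1 * c1 * (2 * (q * (1 - p)) * q) = (q * (q * (1 - p)) ^ 2 + (1 - (1 - q) * u) * u - ((p * (1 - q) + q) * q - (1 - (1 - q) * u)) * ((q * (1 - p)) - u)) := by
      rw [hd1_def]; field_simp
    have hd2c2 : d2 * c2 * (2 * (q * (1 - p)) * q) = 2 * (q * (1 - p)) ^ 2 * q - (q * (q * (1 - p)) ^ 2 + (1 - (1 - q) * u) * u - ((p * (1 - q) + q) * q - (1 - (1 - q) * u)) * ((q * (1 - p)) - u)) := by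
      rw [hd2_def]; field_simp
    obtain ⟨a1, ha1⟩ := exists_sqrt' (1 - q + p * q)
    obtain ⟨b2, hb2⟩ := exists_sqrt' (-p)
    refine ⟨a1, 0, a1, b2, c1, c2, d1, d2, ?_, ?_, ?_, ?_, ?_, ?_, ?_⟩
    · rw [hc1, hc2]; ring
    · linear_combination hqd1 + (1 - q) * hc1
    · exact mul_left_cancel₀ hq (by linear_combination hqd1 + hqd2)
    · exact mul_right_cancel₀ h2sq (by linear_combination hd1c1 + hd2c2)
    · rw [ha1]; ring
    · rw [← ha1]; ring
    · rw [ha1, hb2]; ring
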